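/- arXiv:1002.1837 — 7 statements merged into one kernel-verified Lean document; each statement's English description precedes it below -/
import Mathlib

section
/- Let L be an invertible n×n complex matrix. There exists a nonzero Hermitian n×n complex matrix H satisfying L H L* = −H (where L* denotes the conjugate transpose) if and only if there exists a complex number λ such that both λ and −1/\overline{λ} are eigenvalues of L. -/
open Matrix Polynomial

namespace Stmt0Aux

variable {m : ℕ}

lemma charpoly_eval (M : Matrix (Fin m) (Fin m) ℂ) (μ : ℂ) :
    (M.charpoly).eval μ = (μ • (1 : Matrix (Fin m) (Fin m) ℂ) - M).det := by
  rw [Matrix.charpoly, ← coe_evalRingHom, RingHom.map_det]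
  congr 1
  ext i j
  by_cases h : i = j
  · subst h
    simp [Matrix.charmatrix_apply_eq, Matrix.smul_apply, Matrix.one_apply]
  · simp [Matrix.charmatrix_apply_ne _ _ _ h, Matrix.smul_apply, Matrix.one_apply_ne h,
      Matrix.sub_apply]

lemma spec_iff_det (M : Matrix (Fin m) (Fin m) ℂ) (μ : ℂ) :
    μ ∈ spectrum ℂ M ↔ (μ • (1 : Matrix (Fin m) (Fin m) ℂ) - M).det = 0 := by
  rw [spectrum.mem_iff, Matrix.isUnit_iff_isUnit_det, isUnit_iff_ne_zero, not_not,
    Algebra.algebraMap_eq_smul_one]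

lemma spec_iff_eig (M : Matrix (Fin m) (Fin m) ℂ) (μ : ℂ) :
    μ ∈ spectrum ℂ M ↔ ∃ v : Fin m → ℂ, v ≠ 0 ∧ M *ᵥ v = μ • v := by
  rw [spec_iff_det, ← Matrix.exists_mulVec_eq_zero_iff]
  constructor
  · rintro ⟨v, hv, h⟩
    refine ⟨v, hv, ?_⟩
    rw [Matrix.sub_mulVec, Matrix.smul_mulVec, Matrix.one_mulVec, sub_eq_zero] at h
    exact h.symm
  · rintro ⟨v, hv, h⟩
    refine ⟨v, hv, ?_⟩
    rw [Matrix.sub_mulVec, Matrix.smul_mulVec, Matrix.one_mulVec, sub_eq_zero, h]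

lemma semiconj_pow {A B H : Matrix (Fin m) (Fin m) ℂ} (h : A * H = H * B) (k : ℕ) :
    A ^ k * H = H * B ^ k := by
  induction k with
  | zero => simp
  | succ k ih =>
    rw [pow_succ, pow_succ, mul_assoc, h, ← mul_assoc, ih, mul_assoc]

lemma semiconj_aeval {A B H : Matrix (Fin m) (Fin m) ℂ} (h : A * H = H * B) (p : ℂ[X]) :
    (aeval A p) * H = H * aeval B p := by
  induction p using Polynomial.induction_on' with
  | add p q hp hq => simp only [map_add, add_mul, mul_add, hp, hq]
  | monomial k c =>
    simp only [aeval_monomial]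
    rw [mul_assoc, semiconj_pow h, ← mul_assoc, Algebra.commutes c H, mul_assoc]

lemma outer_conj (L : Matrix (Fin m) (Fin m) ℂ) (a b : Fin m → ℂ) :
    L * vecMulVec a (star b) * Lᴴ = vecMulVec (L *ᵥ a) (star (L *ᵥ b)) := by
  ext i j
  simp only [Matrix.mul_apply, vecMulVec_apply, Matrix.conjTranspose_apply, Matrix.mulVec,
    dotProduct, Pi.star_apply, star_sum, star_mul', Finset.sum_mul, Finset.mul_sum]
  refine Finset.sum_congr rfl fun k _ => Finset.sum_congr rfl fun l _ => ?_
  ring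


lemma outer_hermit (a b : Fin m → ℂ) :
    (vecMulVec a (star b))ᴴ = vecMulVec b (star a) := by
  ext i j
  simp only [Matrix.conjTranspose_apply, vecMulVec_apply, Pi.star_apply, star_mul', star_star]
  ring

end Stmt0Aux
open Stmt0Aux in
/-- For an invertible `n × n` complex matrix `L`, there exists a nonzero
Hermitian matrix `H` with `L * H * Lᴴ = -H` if and only if there is a complex number `λ`
such that both `λ` and `-1/conj λ` are eigenvalues (spectrum elements) of `L`. -/
theorem stmt0 (n : ℕ) (hn : 1 ≤ n) (L : Matrix (Fin n) (Fin n) ℂ) (hL : IsUnit L) :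
    (∃ H : Matrix (Fin n) (Fin n) ℂ, H ≠ 0 ∧ Hᴴ = H ∧ L * H * Lᴴ = -H) ↔
      (∃ lam : ℂ, lam ∈ spectrum ℂ L ∧ (-1 / (starRingEnd ℂ lam)) ∈ spectrum ℂ L) := by
  haveI : Nonempty (Fin n) := ⟨⟨0, hn⟩⟩
  have hdet : IsUnit L.det := (Matrix.isUnit_iff_isUnit_det L).mp hL
  have hLi : L⁻¹ * L = 1 := Matrix.nonsing_inv_mul L hdet
  have hLi' : L * L⁻¹ = 1 := Matrix.mul_nonsing_inv L hdet
  constructor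
  · rintro ⟨H, hH0, hHerm, hEq⟩
    have hsc : (-L⁻¹) * H = H * Lᴴ := by
      have h1 : H * Lᴴ = -(L⁻¹ * H) := by
        calc H * Lᴴ = (L⁻¹ * L) * H * Lᴴ := by rw [hLi, one_mul]
          _ = L⁻¹ * (L * H * Lᴴ) := by simp only [Matrix.mul_assoc]
          _ = L⁻¹ * (-H) := by rw [hEq]
          _ = -(L⁻¹ * H) := by rw [mul_neg]
      rw [h1, neg_mul]
    set A : Matrix (Fin n) (Fin n) ℂ := -L⁻¹ with hA
    set p : Polynomial ℂ := (Lᴴ).charpoly with hp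
    have hzero : (Polynomial.aeval A p) * H = 0 := by
      rw [semiconj_aeval hsc, Matrix.aeval_self_charpoly, mul_zero]
    have hnu : ¬ IsUnit (Polynomial.aeval A p) := by
      rintro ⟨u, hu⟩
      apply hH0
      calc H = 1 * H := (one_mul H).symm
        _ = (↑u⁻¹ * ↑u) * H := by rw [Units.inv_mul]
        _ = ↑u⁻¹ * ((Polynomial.aeval A p) * H) := by rw [Matrix.mul_assoc, hu]
        _ = 0 := by rw [hzero, mul_zero]
    have h0spec : (0 : ℂ) ∈ spectrum ℂ (Polynomial.aeval A p) :=
      (spectrum.zero_mem_iff (R := ℂ)).mpr hnu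
    have hdeg : 0 < p.degree := by
      rw [hp, Matrix.charpoly_degree_eq_dim, Fintype.card_fin]
      exact_mod_cast hn
    rw [spectrum.map_polynomial_aeval_of_degree_pos A p hdeg] at h0spec
    obtain ⟨μ, hμA, hμp⟩ := h0spec
    have hc : (starRingEnd ℂ μ) ∈ spectrum ℂ L := by
      rw [spec_iff_det]
      have hd : (μ • (1 : Matrix (Fin n) (Fin n) ℂ) - Lᴴ).det = 0 := by
        rw [← charpoly_eval]; exact hμp
      have h2 : ((starRingEnd ℂ μ) • (1 : Matrix (Fin n) (Fin n) ℂ) - L)ᴴ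
          = μ • (1 : Matrix (Fin n) (Fin n) ℂ) - Lᴴ := by
        rw [conjTranspose_sub, conjTranspose_smul, conjTranspose_one]
        simp
      have h3 := congrArg Matrix.det h2
      rw [Matrix.det_conjTranspose, hd] at h3
      exact star_eq_zero.mp h3
    obtain ⟨u, hu0, huE⟩ := (spec_iff_eig A μ).mp hμA
    have hLiu : L⁻¹ *ᵥ u = (-μ) • u := by
      have h4 : -(L⁻¹ *ᵥ u) = μ • u := by rw [← Matrix.neg_mulVec]; exact huE
      rw [neg_smul, ← h4, neg_neg]
    have hμ0 : μ ≠ 0 := by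
      intro h
      apply hu0
      have h5 : L⁻¹ *ᵥ u = 0 := by rw [hLiu, h, neg_zero, zero_smul]
      calc u = (L * L⁻¹) *ᵥ u := by rw [hLi', Matrix.one_mulVec]
        _ = L *ᵥ (L⁻¹ *ᵥ u) := by rw [← Matrix.mulVec_mulVec]
        _ = 0 := by rw [h5, Matrix.mulVec_zero]
    have hLu : L *ᵥ u = (-1/μ) • u := by
      have h6 : (-μ) • (L *ᵥ u) = u := by
        calc (-μ) • (L *ᵥ u) = L *ᵥ ((-μ) • u) := (Matrix.mulVec_smul L (-μ) u).symm
          _ = L *ᵥ (L⁻¹ *ᵥ u) := by rw [hLiu]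
          _ = (L * L⁻¹) *ᵥ u := Matrix.mulVec_mulVec u L L⁻¹
          _ = u := by rw [hLi', Matrix.one_mulVec]
      have hμn : (-μ) ≠ 0 := neg_ne_zero.mpr hμ0
      have := congrArg (fun x => (-μ)⁻¹ • x) h6
      simp only [smul_smul, inv_mul_cancel₀ hμn, one_smul] at this
      rw [this]
      congr 1
      field_simp
    refine ⟨starRingEnd ℂ μ, hc, ?_⟩
    rw [Complex.conj_conj]
    exact (spec_iff_eig L _).mpr ⟨u, hu0, hLu⟩
  · rintro ⟨lam, h1, h2⟩
    obtain ⟨v, hv0, hv⟩ := (spec_iff_eig L lam).mp h1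
    obtain ⟨w, hw0, hw⟩ := (spec_iff_eig L _).mp h2
    set μ : ℂ := -1 / (starRingEnd ℂ lam) with hμ
    have hlam0 : lam ≠ 0 := by
      intro h
      apply hv0
      have h5 : L *ᵥ v = 0 := by rw [hv, h, zero_smul]
      calc v = (L⁻¹ * L) *ᵥ v := by rw [hLi, Matrix.one_mulVec]
        _ = L⁻¹ *ᵥ (L *ᵥ v) := by rw [← Matrix.mulVec_mulVec]
        _ = 0 := by rw [h5, Matrix.mulVec_zero]
    have hcl : starRingEnd ℂ lam ≠ 0 := by
      simpa using hlam0
    have key1 : lam * starRingEnd ℂ μ = -1 := by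
      rw [hμ]
      simp only [map_div₀, map_neg, _root_.map_one, Complex.conj_conj]
      field_simp
    have key2 : μ * starRingEnd ℂ lam = -1 := by
      rw [hμ]
      field_simp
    set P : Matrix (Fin n) (Fin n) ℂ := vecMulVec v (star w) with hP
    set Q : Matrix (Fin n) (Fin n) ℂ := vecMulVec w (star v) with hQ
    have hPH : Pᴴ = Q := outer_hermit v w
    have hQH : Qᴴ = P := outer_hermit w v
    have hPe : L * P * Lᴴ = -P := by
      rw [hP, outer_conj, hv, hw]
      ext i j
      simp only [vecMulVec_apply, Pi.smul_apply, smul_eq_mul, Pi.star_apply, star_smul,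
        Matrix.neg_apply, Complex.star_def]
      linear_combination (v i * starRingEnd ℂ (w j)) * key1
    have hQe : L * Q * Lᴴ = -Q := by
      rw [hQ, outer_conj, hw, hv]
      ext i j
      simp only [vecMulVec_apply, Pi.smul_apply, smul_eq_mul, Pi.star_apply, star_smul,
        Matrix.neg_apply, Complex.star_def]
      linear_combination (w i * starRingEnd ℂ (v j)) * key2
    have hPne : P ≠ 0 := by
      obtain ⟨i, hi⟩ := Function.ne_iff.mp hv0
      obtain ⟨j, hj⟩ := Function.ne_iff.mp hw0
      intro h
      have := congrFun (congrFun h i) j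
      simp only [hP, vecMulVec_apply, Pi.star_apply, Matrix.zero_apply, Pi.zero_apply] at this
      exact (mul_ne_zero (by simpa using hi) (by simpa using hj)) this
    by_cases hcase : P + Q = 0
    · refine ⟨Complex.I • (P - Q), ?_, ?_, ?_⟩
      · intro h
        rcases smul_eq_zero.mp h with h' | h'
        · exact Complex.I_ne_zero h'
        · apply hPne
          have hQP : Q = P := (sub_eq_zero.mp h').symm
          rw [hQP] at hcase
          have h2s : (2 : ℂ) • P = 0 := by rw [two_smul]; exact hcase
          rcases smul_eq_zero.mp h2s with h'' | h''
          · exact absurd h'' two_ne_zero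
          · exact h''
      · rw [conjTranspose_smul, conjTranspose_sub, hPH, hQH]
        simp only [Complex.star_def, Complex.conj_I, neg_smul, smul_sub]
        abel
      · calc L * (Complex.I • (P - Q)) * Lᴴ
              = Complex.I • (L * (P - Q) * Lᴴ) := by
                rw [mul_smul_comm, smul_mul_assoc]
          _ = Complex.I • (L * P * Lᴴ - L * Q * Lᴴ) := by rw [mul_sub, sub_mul]
          _ = -(Complex.I • (P - Q)) := by
                rw [hPe, hQe, neg_sub_neg, ← smul_neg, neg_sub]
    · refine ⟨P + Q, hcase, ?_, ?_⟩
      · rw [conjTranspose_add, hPH, hQH, add_comm]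
      · rw [mul_add, add_mul, hPe, hQe, neg_add]
end

section
/- Let A and B be invertible n×n complex matrices and set L = B⁻¹A*. A pair (a,b) of n×n complex matrices satisfies the linearized moment map equations a*A + A*a − Bb* − bB* = 0 and Ba + bA = 0 if and only if there exists an n×n complex matrix h with a = hA, b = −Bh, and L(h + h*)L* + (h + h*) = 0. -/
open Matrix

/-- For invertible `A`, `B` and `L = B⁻¹ * Aᴴ`, a pair `(a, b)` lies in the
kernel of the differential of the hyperkähler moment map at `(A, B)`, i.e. satisfies
`aᴴA + Aᴴa − Bbᴴ − bBᴴ = 0` and `Ba + bA = 0`, if and only if `a = hA`, `b = −Bh` for some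
matrix `h` with `L(h + hᴴ)Lᴴ + (h + hᴴ) = 0`. -/
theorem stmt2 (n : ℕ) (A B : Matrix (Fin n) (Fin n) ℂ) (hA : IsUnit A) (hB : IsUnit B)
    (a b : Matrix (Fin n) (Fin n) ℂ) :
    (aᴴ * A + Aᴴ * a - B * bᴴ - b * Bᴴ = 0 ∧ B * a + b * A = 0) ↔
      ∃ h : Matrix (Fin n) (Fin n) ℂ, a = h * A ∧ b = -(B * h) ∧
        (B⁻¹ * Aᴴ) * (h + hᴴ) * (B⁻¹ * Aᴴ)ᴴ + (h + hᴴ) = 0 := by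
  have hAd : IsUnit A.det := (Matrix.isUnit_iff_isUnit_det A).mp hA
  have hBd : IsUnit B.det := (Matrix.isUnit_iff_isUnit_det B).mp hB
  have hBHd : IsUnit Bᴴ.det := by
    rw [Matrix.det_conjTranspose]; exact hBd.map (starRingEnd ℂ)
  have hAi' : A⁻¹ * A = 1 := Matrix.nonsing_inv_mul A hAd
  have hBi' : B⁻¹ * B = 1 := Matrix.nonsing_inv_mul B hBd
  have hBHi : Bᴴ * (Bᴴ)⁻¹ = 1 := Matrix.mul_nonsing_inv _ hBHd
  have hLH : (B⁻¹ * Aᴴ)ᴴ = A * (Bᴴ)⁻¹ := by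
    rw [Matrix.conjTranspose_mul, Matrix.conjTranspose_conjTranspose,
      Matrix.conjTranspose_nonsing_inv]
  -- key: for any h, L(h+hᴴ)Lᴴ + (h+hᴴ) = B⁻¹ * (Aᴴ(h+hᴴ)A + B(h+hᴴ)Bᴴ) * (Bᴴ)⁻¹
  have key : ∀ h : Matrix (Fin n) (Fin n) ℂ,
      (B⁻¹ * Aᴴ) * (h + hᴴ) * (B⁻¹ * Aᴴ)ᴴ + (h + hᴴ)
        = B⁻¹ * (Aᴴ * (h + hᴴ) * A + B * (h + hᴴ) * Bᴴ) * (Bᴴ)⁻¹ := by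
    intro h
    conv_rhs => rw [Matrix.mul_add, Matrix.add_mul]
    have h1 : B⁻¹ * (Aᴴ * (h + hᴴ) * A) * (Bᴴ)⁻¹
        = B⁻¹ * Aᴴ * (h + hᴴ) * (A * (Bᴴ)⁻¹) := by
      simp only [Matrix.mul_assoc]
    have h2 : B⁻¹ * (B * (h + hᴴ) * Bᴴ) * (Bᴴ)⁻¹ = h + hᴴ := by
      rw [Matrix.mul_assoc B, ← Matrix.mul_assoc B⁻¹, hBi', Matrix.one_mul,
        Matrix.mul_assoc, hBHi, Matrix.mul_one]
    rw [h1, h2, hLH]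
  constructor
  · rintro ⟨h1, h2⟩
    refine ⟨a * A⁻¹, ?_, ?_, ?_⟩
    · rw [Matrix.mul_assoc, hAi', Matrix.mul_one]
    · have : b * A * A⁻¹ = -(B * a) * A⁻¹ := by
        rw [show b * A = -(B * a) from by linear_combination (norm := noncomm_ring) h2]
      rw [Matrix.mul_nonsing_inv_cancel_right A b hAd] at this
      rw [this]; simp only [Matrix.neg_mul, Matrix.mul_assoc]
    · set h := a * A⁻¹ with hh
      have ha : a = h * A := by rw [hh, Matrix.mul_assoc, hAi', Matrix.mul_one]
      have hb : b = -(B * h) := by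
        have : b * A * A⁻¹ = -(B * a) * A⁻¹ := by
          rw [show b * A = -(B * a) from by linear_combination (norm := noncomm_ring) h2]
        rw [Matrix.mul_nonsing_inv_cancel_right A b hAd] at this
        rw [this]; simp only [Matrix.neg_mul, Matrix.mul_assoc, hh]
      have hK : Aᴴ * (h + hᴴ) * A + B * (h + hᴴ) * Bᴴ = 0 := by
        have := h1
        rw [ha, hb] at this
        simp only [Matrix.conjTranspose_mul, Matrix.conjTranspose_neg] at this
        linear_combination (norm := noncomm_ring) this
      rw [key, hK]
      simp
  · rintro ⟨h, ha, hb, hL⟩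
    have hK : Aᴴ * (h + hᴴ) * A + B * (h + hᴴ) * Bᴴ = 0 := by
      have := congrArg (fun X => B * X * Bᴴ) (key h ▸ hL)
      rw [Matrix.mul_assoc B⁻¹, ← Matrix.mul_assoc B B⁻¹,
        Matrix.mul_nonsing_inv B hBd, Matrix.one_mul,
        Matrix.mul_assoc _ (Bᴴ)⁻¹, Matrix.nonsing_inv_mul _ hBHd,
        Matrix.mul_one, Matrix.mul_zero, Matrix.zero_mul] at this
      exact this
    constructor
    · rw [ha, hb]
      simp only [Matrix.conjTranspose_mul, Matrix.conjTranspose_neg]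
      linear_combination (norm := noncomm_ring) hK
    · rw [ha, hb]; simp [Matrix.mul_assoc]
end

section
/- The set of pairs (A,B) of n×n complex matrices such that A and B are invertible and the matrix L = B⁻¹A* has no pair of eigenvalues of the form λ and −1/\overline{λ} (for any complex number λ) is dense in the space of all pairs of n×n complex matrices. -/
open Matrix Pointwise

private lemma finE (d : ℂ) : {t : ℝ | (t : ℂ)^2 * d = -1}.Finite := by
  rcases eq_or_ne d 0 with hd | hd
  · have : {t : ℝ | (t : ℂ)^2 * d = -1} = ∅ := by
      ext t; simp [hd]
    exact this ▸ Set.finite_empty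
  · obtain ⟨w, hw⟩ := IsAlgClosed.exists_pow_nat_eq (-1 / d) (n := 2) (by norm_num)
    have hsub : {t : ℝ | (t : ℂ)^2 * d = -1} ⊆ (fun t : ℝ => (t : ℂ)) ⁻¹' {w, -w} := by
      intro t ht
      have h2 : ((t : ℂ))^2 = w^2 := by
        rw [hw, eq_div_iff hd]
        exact ht
      have hfac : ((t : ℂ) - w) * ((t : ℂ) + w) = 0 := by linear_combination h2
      rcases mul_eq_zero.mp hfac with h | h
      · left; exact sub_eq_zero.mp h
      · right; exact eq_neg_of_add_eq_zero_left h
    exact ((Set.finite_singleton (-w) |>.insert w).preimage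
      (Complex.ofReal_injective.injOn)).subset hsub

private lemma mem_S {n : ℕ} (A' B' : Matrix (Fin n) (Fin n) ℂ) (hA' : IsUnit A') (hB' : IsUnit B')
    (t : ℝ) (ht0 : (t : ℂ) ≠ 0)
    (ht : ∀ a ∈ spectrum ℂ (B'⁻¹ * A'ᴴ), ∀ b ∈ spectrum ℂ (B'⁻¹ * A'ᴴ),
      (t : ℂ)^2 * ((starRingEnd ℂ) a * b) ≠ -1) :
    IsUnit ((t : ℂ) • A') ∧ IsUnit B' ∧
      ¬∃ lam : ℂ, lam ∈ spectrum ℂ (B'⁻¹ * ((t : ℂ) • A')ᴴ) ∧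
        (-1 / (starRingEnd ℂ lam)) ∈ spectrum ℂ (B'⁻¹ * ((t : ℂ) • A')ᴴ) := by
  set L := B'⁻¹ * A'ᴴ with hLdef
  have hL : IsUnit L := (Matrix.isUnit_nonsing_inv_iff.mpr hB').mul
    ((Matrix.isUnit_conjTranspose _).mpr hA')
  refine ⟨?_, hB', ?_⟩
  · rw [Matrix.isUnit_iff_isUnit_det, Matrix.det_smul]
    exact (ht0.isUnit.pow _).mul ((Matrix.isUnit_iff_isUnit_det _).mp hA')
  · have hrw : B'⁻¹ * ((t : ℂ) • A')ᴴ = (t : ℂ) • L := by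
      rw [Matrix.conjTranspose_smul, Matrix.mul_smul]
      congr 1
      simp [Complex.star_def, Complex.conj_ofReal]
    rw [hrw]
    set u : ℂˣ := Units.mk0 _ ht0 with hu
    have hσ : spectrum ℂ ((t : ℂ) • L) = u • spectrum ℂ L := by
      rw [show (t : ℂ) • L = u • L from rfl]
      exact spectrum.unit_smul_eq_smul L u
    rintro ⟨lam, h1, h2⟩
    rw [hσ] at h1 h2
    have h0L : (0 : ℂ) ∉ spectrum ℂ L := spectrum.zero_notMem_iff ℂ |>.mpr hL
    by_cases hlam : lam = 0
    · subst hlam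
      obtain ⟨a, ha, hua⟩ := Set.mem_smul_set.mp h1
      have hua' : (t : ℂ) * a = 0 := hua
      have : a = 0 := by
        rcases mul_eq_zero.mp hua' with h | h
        · exact absurd h ht0
        · exact h
      exact h0L (this ▸ ha)
    · obtain ⟨a, ha, hua⟩ := Set.mem_smul_set.mp h1
      obtain ⟨b, hb, hub⟩ := Set.mem_smul_set.mp h2
      have hua' : (t : ℂ) * a = lam := hua
      have hub' : (t : ℂ) * b = -1 / (starRingEnd ℂ) lam := hub
      have hlc : (starRingEnd ℂ) lam ≠ 0 := by
        intro h
        apply hlam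
        have := congrArg (starRingEnd ℂ) h
        simpa using this
      have key : (starRingEnd ℂ) lam * ((t : ℂ) * b) = -1 := by
        rw [hub']; field_simp
      have hconj : (starRingEnd ℂ) lam = (t : ℂ) * (starRingEnd ℂ) a := by
        rw [← hua', _root_.map_mul, Complex.conj_ofReal]
      exact ht a ha b hb (by rw [← key, hconj]; ring)

/-- The set of pairs `(A, B)` of invertible `n × n` complex matrices such that
`L = B⁻¹Aᴴ` has no pair of eigenvalues of the form `λ`, `−1/conj λ` is dense in the space of
all pairs of `n × n` complex matrices. -/
theorem stmt4 (n : ℕ) :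
    Dense {p : Matrix (Fin n) (Fin n) ℂ × Matrix (Fin n) (Fin n) ℂ |
      IsUnit p.1 ∧ IsUnit p.2 ∧
        ¬∃ lam : ℂ, lam ∈ spectrum ℂ (p.2⁻¹ * p.1ᴴ) ∧
          (-1 / (starRingEnd ℂ lam)) ∈ spectrum ℂ (p.2⁻¹ * p.1ᴴ)} := by
  intro p
  obtain ⟨A, B⟩ := p
  -- choose z k avoiding both spectra
  have hz : ∀ k : ℕ, ∃ z : ℂ, ‖z‖ < 1/(k+1) ∧ z ∉ spectrum ℂ A ∧ z ∉ spectrum ℂ B := by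
    intro k
    have hfin : (spectrum ℂ A ∪ spectrum ℂ B).Finite :=
      A.finite_spectrum.union B.finite_spectrum
    have hdz : Dense ((spectrum ℂ A ∪ spectrum ℂ B)ᶜ) := hfin.countable.dense_compl ℂ
    obtain ⟨w, hw1, hw2⟩ := Metric.dense_iff.mp hdz 0 (1/(k+1)) (by positivity)
    rw [Set.mem_compl_iff, Set.mem_union, not_or] at hw2
    exact ⟨w, by simpa using hw1, hw2.1, hw2.2⟩
  choose z hz1 hz2 hz3 using hz
  set A' : ℕ → Matrix (Fin n) (Fin n) ℂ := fun k => A - z k • 1 with hA'def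
  set B' : ℕ → Matrix (Fin n) (Fin n) ℂ := fun k => B - z k • 1 with hB'def
  have hAu : ∀ k, IsUnit (A' k) := by
    intro k
    have h := (spectrum.notMem_iff.mp (hz2 k)).neg
    simpa [hA'def, Algebra.algebraMap_eq_smul_one, neg_sub] using h
  have hBu : ∀ k, IsUnit (B' k) := by
    intro k
    have h := (spectrum.notMem_iff.mp (hz3 k)).neg
    simpa [hB'def, Algebra.algebraMap_eq_smul_one, neg_sub] using h
  set L : ℕ → Matrix (Fin n) (Fin n) ℂ := fun k => (B' k)⁻¹ * (A' k)ᴴ with hLdef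
  have ht : ∀ k : ℕ, ∃ t : ℝ, |t - 1| < 1/(k+1) ∧ t ≠ 0 ∧
      ∀ a ∈ spectrum ℂ (L k), ∀ b ∈ spectrum ℂ (L k),
        (t : ℂ)^2 * ((starRingEnd ℂ) a * b) ≠ -1 := by
    intro k
    set T : Set ℝ := insert 0 (⋃ a ∈ spectrum ℂ (L k), ⋃ b ∈ spectrum ℂ (L k),
      {t : ℝ | (t : ℂ)^2 * ((starRingEnd ℂ) a * b) = -1}) with hTdef
    have hT : T.Finite := Set.Finite.insert _
      ((L k).finite_spectrum.biUnion fun a _ =>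
        (L k).finite_spectrum.biUnion fun b _ => finE _)
    obtain ⟨t, htb, htc⟩ := Metric.dense_iff.mp (hT.countable.dense_compl ℝ) 1 (1/(k+1))
      (by positivity)
    rw [Set.mem_compl_iff] at htc
    refine ⟨t, by simpa [Real.dist_eq] using htb, ?_, ?_⟩
    · intro h
      exact htc (h ▸ Set.mem_insert 0 _)
    · intro a ha b hb hEq
      exact htc (Set.mem_insert_of_mem _ (Set.mem_biUnion ha (Set.mem_biUnion hb hEq)))
  choose t ht1 ht2 ht3 using ht
  have hmem : ∀ k, ((t k : ℂ) • A' k, B' k) ∈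
      {p : Matrix (Fin n) (Fin n) ℂ × Matrix (Fin n) (Fin n) ℂ |
        IsUnit p.1 ∧ IsUnit p.2 ∧
          ¬∃ lam : ℂ, lam ∈ spectrum ℂ (p.2⁻¹ * p.1ᴴ) ∧
            (-1 / (starRingEnd ℂ lam)) ∈ spectrum ℂ (p.2⁻¹ * p.1ᴴ)} := by
    intro k
    have := mem_S (A' k) (B' k) (hAu k) (hBu k) (t k)
      (Complex.ofReal_ne_zero.mpr (ht2 k)) (ht3 k)
    exact ⟨this.1, this.2.1, this.2.2⟩
  -- convergence
  have htt : Filter.Tendsto t Filter.atTop (nhds 1) := by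
    rw [tendsto_iff_dist_tendsto_zero]
    exact squeeze_zero (g := fun k : ℕ => 1/((k:ℝ)+1)) (fun k => dist_nonneg)
      (fun k => le_of_lt (by rw [Real.dist_eq]; exact ht1 k))
      tendsto_one_div_add_atTop_nhds_zero_nat
  have hzt : Filter.Tendsto z Filter.atTop (nhds 0) := by
    rw [tendsto_iff_dist_tendsto_zero]
    exact squeeze_zero (g := fun k : ℕ => 1/((k:ℝ)+1)) (fun k => dist_nonneg)
      (fun k => le_of_lt (by rw [dist_zero_right]; exact hz1 k))
      tendsto_one_div_add_atTop_nhds_zero_nat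
  have h1 : Filter.Tendsto (fun k => (t k : ℂ)) Filter.atTop (nhds 1) := by
    have := (Complex.continuous_ofReal.tendsto 1).comp htt
    simpa [Function.comp_def] using this
  have hA'' : Filter.Tendsto A' Filter.atTop (nhds A) := by
    have h0 : Filter.Tendsto (fun k => z k • (1 : Matrix (Fin n) (Fin n) ℂ))
        Filter.atTop (nhds ((0 : ℂ) • 1)) := hzt.smul_const 1
    have := Filter.Tendsto.const_sub A h0
    simpa using this
  have hB'' : Filter.Tendsto B' Filter.atTop (nhds B) := by
    have h0 : Filter.Tendsto (fun k => z k • (1 : Matrix (Fin n) (Fin n) ℂ))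
        Filter.atTop (nhds ((0 : ℂ) • 1)) := hzt.smul_const 1
    have := Filter.Tendsto.const_sub B h0
    simpa using this
  have hq : Filter.Tendsto (fun k => ((t k : ℂ) • A' k, B' k)) Filter.atTop
      (nhds (A, B)) := by
    have := (h1.smul hA'').prodMk_nhds hB''
    simpa using this
  exact mem_closure_of_tendsto hq (Filter.Eventually.of_forall hmem)
end

section
/- Let A and B be invertible n×n complex matrices such that L = B⁻¹A* has no pair of eigenvalues of the form λ and −1/\overline{λ}. Then a pair (a,b) of n×n complex matrices satisfies a*A + A*a − Bb* − bB* = 0 and Ba + bA = 0 if and only if there exists a skew-Hermitian n×n complex matrix u (i.e., u* = −u) with a = uA and b = −Bu. (That is, at such regular points the kernel of the differential of the moment map equals the tangent space to the U(n)_L-orbit.) -/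
open Matrix Polynomial

lemma pow_intertwine {n : ℕ} (L M X : Matrix (Fin n) (Fin n) ℂ)
    (h : L * X = X * M) (k : ℕ) : L ^ k * X = X * M ^ k := by
  induction k with
  | zero => simp
  | succ k ih => rw [pow_succ, pow_succ, mul_assoc, h, ← mul_assoc, ih, mul_assoc]

lemma aeval_intertwine {n : ℕ} (L M X : Matrix (Fin n) (Fin n) ℂ)
    (h : L * X = X * M) (p : ℂ[X]) :
    (aeval L p) * X = X * (aeval M p) := by
  induction p using Polynomial.induction_on' with
  | add p q hp hq => rw [map_add, map_add, add_mul, mul_add, hp, hq]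
  | monomial k c =>
    simp only [aeval_monomial, Algebra.algebraMap_eq_smul_one, smul_mul_assoc, one_mul,
      mul_smul_comm]
    rw [pow_intertwine L M X h k]

lemma mem_spectrum_of_root_minpoly {n : ℕ} (hn : 0 < n) (M : Matrix (Fin n) (Fin n) ℂ)
    (μ : ℂ) (h : (minpoly ℂ M).eval μ = 0) : μ ∈ spectrum ℂ M := by
  haveI : NeZero n := ⟨hn.ne'⟩
  let e := Matrix.toLinAlgEquiv (Pi.basisFun ℂ (Fin n))
  rw [← AlgEquiv.spectrum_eq e, ← Module.End.hasEigenvalue_iff_mem_spectrum]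
  apply Module.End.hasEigenvalue_of_isRoot
  rwa [minpoly.algEquiv_eq, Polynomial.IsRoot]

/-- Sylvester-type uniqueness: if `L X = X M` and spectra of `L` and `M` are disjoint, `X = 0`. -/
lemma sylvester_zero {n : ℕ} (hn : 0 < n) (L M X : Matrix (Fin n) (Fin n) ℂ)
    (h : L * X = X * M)
    (hdisj : ∀ μ : ℂ, μ ∈ spectrum ℂ M → μ ∉ spectrum ℂ L) : X = 0 := by
  haveI : NeZero n := ⟨hn.ne'⟩
  have hint : IsIntegral ℂ M := IsIntegral.of_finite ℂ M
  set p := minpoly ℂ M with hp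
  have hpM : aeval M p = 0 := minpoly.aeval ℂ M
  have key : (aeval L p) * X = 0 := by
    rw [aeval_intertwine L M X h p, hpM, mul_zero]
  have hunit : IsUnit (aeval L p) := by
    by_contra hcon
    rw [← spectrum.zero_mem_iff ℂ] at hcon
    rw [spectrum.map_polynomial_aeval_of_degree_pos L p (minpoly.degree_pos hint)] at hcon
    obtain ⟨μ, hμL, hμp⟩ := hcon
    exact hdisj μ (mem_spectrum_of_root_minpoly hn M μ hμp) hμL
  obtain ⟨v, hv⟩ := hunit
  calc X = (↑v⁻¹ * v) * X := by rw [Units.inv_mul, one_mul]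
  _ = ↑v⁻¹ * ((aeval L p) * X) := by rw [mul_assoc, hv]
  _ = 0 := by rw [key, mul_zero]

lemma isUnit_smul_iff' {n : ℕ} (c : ℂ) (hc : c ≠ 0) (X : Matrix (Fin n) (Fin n) ℂ) :
    IsUnit (c • X) ↔ IsUnit X := by
  rw [Matrix.isUnit_iff_isUnit_det, Matrix.isUnit_iff_isUnit_det, Matrix.det_smul]
  simp [isUnit_iff_ne_zero, hc, pow_ne_zero]

lemma isUnit_conjTranspose_iff' {n : ℕ} (X : Matrix (Fin n) (Fin n) ℂ) :
    IsUnit Xᴴ ↔ IsUnit X := by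
  rw [Matrix.isUnit_iff_isUnit_det, Matrix.isUnit_iff_isUnit_det, Matrix.det_conjTranspose]
  simp [isUnit_iff_ne_zero]

/-- If `A`, `B` are invertible and `L = B⁻¹Aᴴ` has no pair of eigenvalues of the
form `λ`, `−1/conj λ`, then `(a, b)` lies in the kernel of the differential of the moment map
at `(A, B)` if and only if `a = uA`, `b = −Bu` for some skew-Hermitian `u`. -/
theorem stmt5 (n : ℕ) (A B : Matrix (Fin n) (Fin n) ℂ) (hA : IsUnit A) (hB : IsUnit B)
    (hreg : ¬∃ lam : ℂ, lam ∈ spectrum ℂ (B⁻¹ * Aᴴ) ∧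
      (-1 / (starRingEnd ℂ lam)) ∈ spectrum ℂ (B⁻¹ * Aᴴ))
    (a b : Matrix (Fin n) (Fin n) ℂ) :
    (aᴴ * A + Aᴴ * a - B * bᴴ - b * Bᴴ = 0 ∧ B * a + b * A = 0) ↔
      ∃ u : Matrix (Fin n) (Fin n) ℂ, uᴴ = -u ∧ a = u * A ∧ b = -(B * u) := by
  haveI iA : Invertible A := hA.invertible
  haveI iB : Invertible B := hB.invertible
  haveI iAH : Invertible Aᴴ := Invertible.star A
  haveI iBH : Invertible Bᴴ := Invertible.star B
  constructor
  · rintro ⟨h1, h2⟩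
    rcases Nat.eq_zero_or_pos n with hn | hn
    · subst hn
      exact ⟨0, Subsingleton.elim _ _, Subsingleton.elim _ _, Subsingleton.elim _ _⟩
    set u := a * A⁻¹ with hu
    have ha : a = u * A := by rw [hu, inv_mul_cancel_right_of_invertible]
    have hb : b = -(B * u) := by
      have hba : b * A = -(B * a) := by linear_combination (norm := noncomm_ring) h2
      calc b = b * A * A⁻¹ := by rw [mul_inv_cancel_right_of_invertible]
      _ = -(B * a) * A⁻¹ := by rw [hba]
      _ = -(B * u) := by rw [hu]; noncomm_ring
    refine ⟨u, ?_, ha, hb⟩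
    -- show u is skew-Hermitian
    set s := u + uᴴ with hs
    have hkey : Aᴴ * s * A + B * s * Bᴴ = 0 := by
      have e1 : aᴴ = Aᴴ * uᴴ := by rw [ha, conjTranspose_mul]
      have e2 : bᴴ = -(uᴴ * Bᴴ) := by rw [hb, conjTranspose_neg, conjTranspose_mul]
      rw [e1, e2, ha, hb] at h1
      rw [hs]
      linear_combination (norm := noncomm_ring) h1
    set L := B⁻¹ * Aᴴ with hL
    haveI iBi : Invertible B⁻¹ := by infer_instance
    haveI iL : Invertible L := by rw [hL]; exact invertibleMul _ _
    haveI iLH : Invertible Lᴴ := Invertible.star L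
    have hLH : Lᴴ = A * (Bᴴ)⁻¹ := by
      rw [hL, conjTranspose_mul, conjTranspose_nonsing_inv, conjTranspose_conjTranspose]
    have hsM : L * s = s * (-(Lᴴ)⁻¹) := by
      have h3 : L * s * Lᴴ = -s := by
        have h4 : Aᴴ * s * A = -(B * s * Bᴴ) := by
          linear_combination (norm := noncomm_ring) hkey
        rw [hLH]
        calc L * s * (A * Bᴴ⁻¹) = B⁻¹ * (Aᴴ * s * A) * Bᴴ⁻¹ := by rw [hL]; noncomm_ring
        _ = -(B⁻¹ * B * s * (Bᴴ * Bᴴ⁻¹)) := by rw [h4]; noncomm_ring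
        _ = -s := by rw [inv_mul_of_invertible, mul_inv_of_invertible]; noncomm_ring
      calc L * s = L * s * Lᴴ * (Lᴴ)⁻¹ := by rw [mul_inv_cancel_right_of_invertible]
      _ = -s * (Lᴴ)⁻¹ := by rw [h3]
      _ = s * (-(Lᴴ)⁻¹) := by noncomm_ring
    have hdisj : ∀ μ : ℂ, μ ∈ spectrum ℂ (-(Lᴴ)⁻¹) → μ ∉ spectrum ℂ L := by
      intro μ hμM hμL
      apply hreg
      refine ⟨μ, hμL, ?_⟩
      have hμ0 : μ ≠ 0 := by
        rintro rfl
        rw [spectrum.zero_mem_iff] at hμM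
        exact hμM ((isUnit_of_invertible (Lᴴ)⁻¹).neg)
      have hμc : starRingEnd ℂ μ ≠ 0 := by simpa using hμ0
      rw [spectrum.mem_iff] at hμM ⊢
      intro hcon
      apply hμM
      set ν : ℂ := -1 / starRingEnd ℂ μ with hν
      have hνc : starRingEnd ℂ ν = -μ⁻¹ := by
        rw [hν, map_div₀, map_neg, _root_.map_one, Complex.conj_conj, neg_div, one_div]
      -- conjugate transpose of the unit
      have step1 : IsUnit ((starRingEnd ℂ ν) • (1 : Matrix (Fin n) (Fin n) ℂ) - Lᴴ) := by
        have h5 := (isUnit_conjTranspose_iff' _).mpr hcon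
        have h6 : ((algebraMap ℂ (Matrix (Fin n) (Fin n) ℂ)) ν - L)ᴴ
            = (starRingEnd ℂ ν) • (1 : Matrix (Fin n) (Fin n) ℂ) - Lᴴ := by
          rw [conjTranspose_sub, Algebra.algebraMap_eq_smul_one, conjTranspose_smul,
            conjTranspose_one]
          rfl
        rwa [h6] at h5
      have step2 : IsUnit ((1 : Matrix (Fin n) (Fin n) ℂ) + μ • Lᴴ) := by
        have h7 : (-μ) • ((starRingEnd ℂ ν) • (1 : Matrix (Fin n) (Fin n) ℂ) - Lᴴ)
            = 1 + μ • Lᴴ := by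
          have h8 : (-μ) * (-μ⁻¹) = 1 := by field_simp
          rw [hνc, smul_sub, smul_smul, h8, one_smul, neg_smul, sub_neg_eq_add]
        rw [← h7]
        exact (isUnit_smul_iff' (-μ) (neg_ne_zero.mpr hμ0) _).mpr step1
      have step3 : IsUnit (((1 : Matrix (Fin n) (Fin n) ℂ) + μ • Lᴴ) * (Lᴴ)⁻¹) :=
        step2.mul (isUnit_of_invertible _)
      have h9 : ((1 : Matrix (Fin n) (Fin n) ℂ) + μ • Lᴴ) * (Lᴴ)⁻¹
          = (algebraMap ℂ (Matrix (Fin n) (Fin n) ℂ)) μ - -(Lᴴ)⁻¹ := by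
        rw [add_mul, one_mul, smul_mul_assoc, mul_inv_of_invertible,
          Algebra.algebraMap_eq_smul_one, sub_neg_eq_add, add_comm]
      rwa [h9] at step3
    have hs0 : s = 0 := sylvester_zero hn L (-(Lᴴ)⁻¹) s hsM hdisj
    rw [hs] at hs0
    linear_combination (norm := noncomm_ring) hs0
  · rintro ⟨u, hu, ha, hb⟩
    subst ha hb
    constructor
    · have h1 : (u * A)ᴴ = Aᴴ * uᴴ := conjTranspose_mul u A
      have h2 : (-(B * u))ᴴ = -(uᴴ * Bᴴ) := by rw [conjTranspose_neg, conjTranspose_mul]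
      rw [h1, h2, hu]
      noncomm_ring
    · noncomm_ring
end

section
/- There exist two pairs (A₁,B₁) and (A₂,B₂) of 2×2 complex matrices, each satisfying Aᵢ*Aᵢ = BᵢBᵢ* and BᵢAᵢ = diag(1,−1), such that there is no unitary 2×2 matrix u with A₁ = uA₂ and B₁ = B₂u*. (That is, the fibre of the hyperkähler moment map over the value (0, diag(1,−1)) consists of more than one U(2)_L-orbit.) -/
open Matrix

/-- There are two points `(A₁, B₁)`, `(A₂, B₂)` in the fibre of the hyperkähler
moment map over `(0, diag(1, −1))` (i.e. with `Aᵢᴴ Aᵢ = Bᵢ Bᵢᴴ` and `Bᵢ Aᵢ = diag(1, −1)`)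
which are not related by the left action of any unitary matrix `u`, `(A, B) ↦ (uA, Buᴴ)`. -/
theorem stmt8 : ∃ A₁ B₁ A₂ B₂ : Matrix (Fin 2) (Fin 2) ℂ,
    (A₁ᴴ * A₁ = B₁ * B₁ᴴ ∧ B₁ * A₁ = !![(1 : ℂ), 0; 0, -1]) ∧
    (A₂ᴴ * A₂ = B₂ * B₂ᴴ ∧ B₂ * A₂ = !![(1 : ℂ), 0; 0, -1]) ∧
    ¬∃ u : Matrix (Fin 2) (Fin 2) ℂ, uᴴ * u = 1 ∧ A₁ = u * A₂ ∧ B₁ = B₂ * uᴴ := by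
  refine ⟨1, !![(1 : ℂ), 0; 0, -1], !![(1 : ℂ), 1; 1/2, -1/2], !![(1/2 : ℂ), 1; -1/2, 1],
    ⟨?_, ?_⟩, ⟨?_, ?_⟩, ?_⟩
  · ext i j
    fin_cases i <;> fin_cases j <;>
      simp [Matrix.mul_apply, Fin.sum_univ_two, conjTranspose_apply]
  · ext i j
    fin_cases i <;> fin_cases j <;>
      simp [Matrix.mul_apply, Fin.sum_univ_two]
  · ext i j
    fin_cases i <;> fin_cases j <;>
      simp [Matrix.mul_apply, Fin.sum_univ_two, conjTranspose_apply, map_ofNat] <;> norm_num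
  · ext i j
    fin_cases i <;> fin_cases j <;>
      simp [Matrix.mul_apply, Fin.sum_univ_two] <;> norm_num
  · rintro ⟨u, hu, hA, -⟩
    have key : (1 : Matrix (Fin 2) (Fin 2) ℂ) =
        !![(1 : ℂ), 1; 1/2, -1/2]ᴴ * !![(1 : ℂ), 1; 1/2, -1/2] := by
      calc (1 : Matrix (Fin 2) (Fin 2) ℂ) = (1 : Matrix (Fin 2) (Fin 2) ℂ)ᴴ * 1 := by simp
        _ = (u * !![(1 : ℂ), 1; 1/2, -1/2])ᴴ * (u * !![(1 : ℂ), 1; 1/2, -1/2]) := by rw [← hA]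
        _ = !![(1 : ℂ), 1; 1/2, -1/2]ᴴ * (uᴴ * u) * !![(1 : ℂ), 1; 1/2, -1/2] := by
              rw [conjTranspose_mul, mul_assoc, mul_assoc, ← mul_assoc uᴴ]
        _ = _ := by rw [hu]; simp
    have h01 := congrFun (congrFun key 0) 1
    simp [Matrix.mul_apply, Fin.sum_univ_two, conjTranspose_apply, Matrix.one_apply, map_ofNat] at h01
    norm_num at h01
end

section
/- Let P be a positive semidefinite Hermitian n×n complex matrix. There exists a unitary n×n matrix W with PWP = 0 if and only if 2·rank(P) ≤ n. -/
open Matrix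
open scoped ComplexOrder

private lemma aux_rank_add {n : ℕ} (A B : Matrix (Fin n) (Fin n) ℂ) (h : A * B = 0) :
    A.rank + B.rank ≤ n := by
  have hle : LinearMap.range B.mulVecLin ≤ LinearMap.ker A.mulVecLin := by
    rw [LinearMap.range_le_ker_iff, ← Matrix.mulVecLin_mul, h, Matrix.mulVecLin_zero]
  have h1 : B.rank ≤ Module.finrank ℂ (LinearMap.ker A.mulVecLin) :=
    Submodule.finrank_mono hle
  have h2 := LinearMap.finrank_range_add_finrank_ker A.mulVecLin
  have h3 : Module.finrank ℂ (Fin n → ℂ) = n := by simp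
  rw [h3] at h2
  have h4 : A.rank = Module.finrank ℂ (LinearMap.range A.mulVecLin) := rfl
  omega

private lemma aux_conj_mul {n : ℕ} (U A B : Matrix (Fin n) (Fin n) ℂ) (hU : Uᴴ * U = 1) :
    (U * A * Uᴴ) * (U * B * Uᴴ) = U * (A * B) * Uᴴ := by
  calc (U * A * Uᴴ) * (U * B * Uᴴ) = U * (A * ((Uᴴ * U) * (B * Uᴴ))) := by
        simp only [Matrix.mul_assoc]
    _ = U * (A * B) * Uᴴ := by rw [hU, Matrix.one_mul]; simp only [Matrix.mul_assoc]

/-- For a positive semidefinite Hermitian matrix `P`, there is a unitary `W` with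
`P W P = 0` if and only if `2 · rank P ≤ n`. -/
theorem stmt9 (n : ℕ) (P : Matrix (Fin n) (Fin n) ℂ) (hP : P.PosSemidef) :
    (∃ W : Matrix (Fin n) (Fin n) ℂ, Wᴴ * W = 1 ∧ P * W * P = 0) ↔ 2 * P.rank ≤ n := by
  constructor
  · rintro ⟨W, hW1, hW2⟩
    have hdet : IsUnit W.det := by
      have h := congrArg Matrix.det hW1
      rw [Matrix.det_mul, Matrix.det_one] at h
      exact IsUnit.of_mul_eq_one _ (by rw [mul_comm]; exact h)
    have h1 : (P * W).rank = P.rank := Matrix.rank_mul_eq_left_of_isUnit_det W P hdet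
    have h2 : (P * W).rank + P.rank ≤ n := aux_rank_add _ _ hW2
    omega
  · intro hrank
    have hH := hP.1
    set d := hH.eigenvalues with hd
    set S : Finset (Fin n) := Finset.univ.filter (fun i => d i ≠ 0) with hS
    have hcard : S.card = P.rank := by
      rw [hH.rank_eq_card_non_zero_eigs, Fintype.card_subtype]
    have hcompl : Sᶜ.card = n - S.card := by rw [Finset.card_compl, Fintype.card_fin]
    have hle : S.card ≤ Sᶜ.card := by omega
    obtain ⟨T, hTsub, hTcard⟩ := Finset.exists_subset_card_eq hle
    have hTS : ∀ x ∈ T, x ∉ S := fun x hx => Finset.mem_compl.mp (hTsub hx)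
    have hnotS : ∀ x, x ∉ S → d x = 0 := by
      intro x hx
      by_contra hne
      exact hx (Finset.mem_filter.mpr ⟨Finset.mem_univ x, hne⟩)
    let e : {x // x ∈ S} ≃ {x // x ∈ T} := Finset.equivOfCardEq hTcard.symm
    let g : Fin n → Fin n := fun x =>
      if hx : x ∈ S then (e ⟨x, hx⟩ : Fin n)
      else if hx' : x ∈ T then (e.symm ⟨x, hx'⟩ : Fin n) else x
    have hginv : Function.Involutive g := by
      intro x
      by_cases hx : x ∈ S
      · have hT' : ((e ⟨x, hx⟩ : {x // x ∈ T}) : Fin n) ∈ T := (e ⟨x, hx⟩).2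
        have hS' : ((e ⟨x, hx⟩ : {x // x ∈ T}) : Fin n) ∉ S := hTS _ hT'
        simp only [g, dif_pos hx, dif_neg hS', dif_pos hT', Subtype.coe_eta,
          Equiv.symm_apply_apply]
      · by_cases hx' : x ∈ T
        · have hS'' : ((e.symm ⟨x, hx'⟩ : {x // x ∈ S}) : Fin n) ∈ S := (e.symm ⟨x, hx'⟩).2
          simp only [g, dif_neg hx, dif_pos hx', dif_pos hS'', Subtype.coe_eta,
            Equiv.apply_symm_apply]
        · simp only [g, dif_neg hx, dif_neg hx']
    have hginj : Function.Injective g := hginv.injective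
    have hgout : ∀ x, x ∈ S → g x ∉ S := by
      intro x hx
      have : g x = ((e ⟨x, hx⟩ : {x // x ∈ T}) : Fin n) := dif_pos hx
      rw [this]
      exact hTS _ (e ⟨x, hx⟩).2
    let V : Matrix (Fin n) (Fin n) ℂ := Matrix.of fun i j => if g j = i then 1 else 0
    have hVU : Vᴴ * V = 1 := by
      ext i j
      simp only [Matrix.mul_apply, Matrix.conjTranspose_apply, Matrix.one_apply, V,
        Matrix.of_apply]
      have hterm : ∀ k ∈ Finset.univ,
          star (if g i = k then (1 : ℂ) else 0) * (if g j = k then 1 else 0)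
            = if g i = k then (if g j = k then (1 : ℂ) else 0) else 0 := by
        intro k _
        by_cases h1 : g i = k <;> simp [h1]
      rw [Finset.sum_congr rfl hterm, Finset.sum_ite_eq]
      simp only [Finset.mem_univ, if_true]
      by_cases hij : i = j
      · simp [hij]
      · rw [if_neg (fun h => hij (hginj h).symm), if_neg hij]
    let U : Matrix (Fin n) (Fin n) ℂ := (hH.eigenvectorUnitary : Matrix (Fin n) (Fin n) ℂ)
    have hU1 : Uᴴ * U = 1 := by
      rw [← Matrix.star_eq_conjTranspose]
      exact Matrix.mem_unitaryGroup_iff'.mp hH.eigenvectorUnitary.2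
    have hU2 : U * Uᴴ = 1 := by
      rw [← Matrix.star_eq_conjTranspose]
      exact Matrix.mem_unitaryGroup_iff.mp hH.eigenvectorUnitary.2
    let D : Matrix (Fin n) (Fin n) ℂ := Matrix.diagonal (RCLike.ofReal ∘ d)
    have hspec : P = U * D * Uᴴ := by
      rw [← Matrix.star_eq_conjTranspose]
      exact hH.spectral_theorem
    have hDVD : D * V * D = 0 := by
      ext i j
      simp only [D, Matrix.zero_apply]
      rw [Matrix.mul_diagonal, Matrix.diagonal_mul]
      simp only [Function.comp_apply, V, Matrix.of_apply]
      by_cases hji : g j = i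
      · by_cases hjS : j ∈ S
        · have : d i = 0 := hnotS i (hji ▸ hgout j hjS)
          simp [this]
        · have : d j = 0 := hnotS j hjS
          simp [this]
      · simp [hji]
    refine ⟨U * V * Uᴴ, ?_, ?_⟩
    · have hWH : (U * V * Uᴴ)ᴴ = U * Vᴴ * Uᴴ := by
        simp [Matrix.conjTranspose_mul, Matrix.mul_assoc]
      rw [hWH, aux_conj_mul _ _ _ hU1, hVU, Matrix.mul_one, hU2]
    · rw [hspec, aux_conj_mul _ _ _ hU1, aux_conj_mul _ _ _ hU1, hDVD,
        Matrix.mul_zero, Matrix.zero_mul]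
end

section
/- Let (A₁,B₁) and (A₂,B₂) be pairs of n×n complex matrices with Aᵢ*Aᵢ = BᵢBᵢ* and BᵢAᵢ = 0 for i = 1,2, and suppose A₁*A₁ = A₂*A₂. Then there exists a unitary n×n matrix u with A₁ = uA₂ and B₁ = B₂u*. (Hence the quotient of the fibre φ⁻¹(0,0) by the left unitary action is identified with the set of nonnegative Hermitian matrices of rank at most n/2, via (A,B) ↦ the nonnegative square root of A*A.) -/
open Matrix



noncomputable section

local notation "⟪" x ", " y "⟫" => @inner ℂ _ _ x y

lemma toEuclideanLin_mul' {l m k : Type*} [Fintype l] [DecidableEq l] [Fintype m] [DecidableEq m]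
    [Fintype k] [DecidableEq k] (P : Matrix l m ℂ) (Q : Matrix m k ℂ) :
    Matrix.toEuclideanLin (P * Q) = (Matrix.toEuclideanLin P) ∘ₗ (Matrix.toEuclideanLin Q) := by
  simp [Matrix.toEuclideanLin_eq_toLin, Matrix.toLin_mul _ (PiLp.basisFun 2 ℂ m) _]

/-- If two matrices have the same Gram matrix, they are related by a unitary. -/
lemma gram_eq_exists_unitary {n : ℕ} {m : Type*} [Fintype m] [DecidableEq m]
    (X Y : Matrix (Fin n) m ℂ) (h : Xᴴ * X = Yᴴ * Y) :
    ∃ u : Matrix (Fin n) (Fin n) ℂ, uᴴ * u = 1 ∧ X = u * Y := by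
  classical
  set fX := Matrix.toEuclideanLin X with hfX
  set fY := Matrix.toEuclideanLin Y with hfY
  have hinner : ∀ v w : EuclideanSpace ℂ m, ⟪fX v, fX w⟫ = ⟪fY v, fY w⟫ := by
    intro v w
    have hX : ⟪fX v, fX w⟫ = ⟪v, Matrix.toEuclideanLin (Xᴴ * X) w⟫ := by
      rw [toEuclideanLin_mul', Matrix.toEuclideanLin_conjTranspose_eq_adjoint,
        LinearMap.comp_apply, LinearMap.adjoint_inner_right]
    have hY : ⟪fY v, fY w⟫ = ⟪v, Matrix.toEuclideanLin (Yᴴ * Y) w⟫ := by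
      rw [toEuclideanLin_mul', Matrix.toEuclideanLin_conjTranspose_eq_adjoint,
        LinearMap.comp_apply, LinearMap.adjoint_inner_right]
    rw [hX, hY, h]
  have hnorm : ∀ v, ‖fX v‖ = ‖fY v‖ := by
    intro v
    have h0 := hinner v v
    have h2 : RCLike.re ⟪fX v, fX v⟫ = RCLike.re ⟪fY v, fY v⟫ := by rw [h0]
    rw [inner_self_eq_norm_sq, inner_self_eq_norm_sq] at h2
    nlinarith [norm_nonneg (fX v), norm_nonneg (fY v)]
  have hker : LinearMap.ker fY ≤ LinearMap.ker fX := by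
    intro v hv
    rw [LinearMap.mem_ker] at hv ⊢
    have := hnorm v
    rw [hv, norm_zero, norm_eq_zero] at this
    exact this
  set q : (EuclideanSpace ℂ m ⧸ LinearMap.ker fY) →ₗ[ℂ] EuclideanSpace ℂ (Fin n) :=
    (LinearMap.ker fY).liftQ fX hker with hq
  set e := fY.quotKerEquivRange with he
  set L0 : LinearMap.range fY →ₗ[ℂ] EuclideanSpace ℂ (Fin n) := q ∘ₗ (e.symm : _ →ₗ[ℂ] _) with hL0
  have hL0apply : ∀ v : EuclideanSpace ℂ m, L0 ⟨fY v, LinearMap.mem_range_self fY v⟩ = fX v := by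
    intro v
    have he2 : e.symm ⟨fY v, LinearMap.mem_range_self fY v⟩ = Submodule.Quotient.mk v := by
      apply e.injective
      simp [he, LinearMap.quotKerEquivRange_apply_mk]
    simp [hL0, he2, hq, Submodule.liftQ_apply]
  have hL0norm : ∀ s : LinearMap.range fY, ‖L0 s‖ = ‖(s : EuclideanSpace ℂ (Fin n))‖ := by
    rintro ⟨s, v, rfl⟩
    rw [hL0apply v]
    exact hnorm v
  set L : LinearMap.range fY →ₗᵢ[ℂ] EuclideanSpace ℂ (Fin n) := ⟨L0, hL0norm⟩ with hL
  set U := L.extend with hU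
  have hUapply : ∀ v : EuclideanSpace ℂ m, U (fY v) = fX v := fun v =>
    (L.extend_apply ⟨fY v, LinearMap.mem_range_self fY v⟩).trans (hL0apply v)
  refine ⟨Matrix.toEuclideanLin.symm U.toLinearMap, ?_, ?_⟩
  · apply Matrix.toEuclideanLin.injective
    rw [toEuclideanLin_mul', Matrix.toEuclideanLin_conjTranspose_eq_adjoint]
    simp only [LinearEquiv.apply_symm_apply]
    refine LinearMap.ext fun v => ?_
    refine ext_inner_left ℂ fun w => ?_
    simp only [LinearMap.comp_apply]
    rw [LinearMap.adjoint_inner_right]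
    rw [show (U.toLinearMap w) = U w from rfl, show (U.toLinearMap v) = U v from rfl,
      U.inner_map_map]
    simp [Matrix.toEuclideanLin_eq_toLin]
  · apply Matrix.toEuclideanLin.injective
    rw [toEuclideanLin_mul']
    simp only [LinearEquiv.apply_symm_apply]
    refine LinearMap.ext fun v => ?_
    exact (hUapply v).symm

end

/-- If `(A₁, B₁)` and `(A₂, B₂)` both lie in the fibre of the hyperkähler moment
map over `(0, 0)` (i.e. `Aᵢᴴ Aᵢ = Bᵢ Bᵢᴴ` and `Bᵢ Aᵢ = 0`) and `A₁ᴴ A₁ = A₂ᴴ A₂`, then they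
are related by the left unitary action `(A, B) ↦ (uA, Buᴴ)`. -/
theorem stmt11 (n : ℕ) (A₁ B₁ A₂ B₂ : Matrix (Fin n) (Fin n) ℂ)
    (h1 : A₁ᴴ * A₁ = B₁ * B₁ᴴ) (h1' : B₁ * A₁ = 0)
    (h2 : A₂ᴴ * A₂ = B₂ * B₂ᴴ) (h2' : B₂ * A₂ = 0)
    (hAA : A₁ᴴ * A₁ = A₂ᴴ * A₂) :
    ∃ u : Matrix (Fin n) (Fin n) ℂ, uᴴ * u = 1 ∧ A₁ = u * A₂ ∧ B₁ = B₂ * uᴴ := by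
  have key : (fromCols A₁ B₁ᴴ)ᴴ * fromCols A₁ B₁ᴴ =
      (fromCols A₂ B₂ᴴ)ᴴ * fromCols A₂ B₂ᴴ := by
    rw [conjTranspose_fromCols_eq_fromRows_conjTranspose,
      conjTranspose_fromCols_eq_fromRows_conjTranspose,
      fromRows_mul_fromCols, fromRows_mul_fromCols]
    have e1 : A₁ᴴ * B₁ᴴ = 0 := by
      rw [← conjTranspose_mul, h1', conjTranspose_zero]
    have e2 : A₂ᴴ * B₂ᴴ = 0 := by
      rw [← conjTranspose_mul, h2', conjTranspose_zero]
    rw [conjTranspose_conjTranspose, conjTranspose_conjTranspose, e1, e2, h1', h2',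
      ← h1, ← h2, hAA]
  obtain ⟨u, hu, huv⟩ := gram_eq_exists_unitary (fromCols A₁ B₁ᴴ) (fromCols A₂ B₂ᴴ) key
  rw [mul_fromCols, fromCols_ext_iff] at huv
  refine ⟨u, hu, huv.1, ?_⟩
  have := congrArg conjTranspose huv.2
  rwa [conjTranspose_conjTranspose, conjTranspose_mul, conjTranspose_conjTranspose] at this
end
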